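/- Let S = {(x_i, y_i)}_{i=1}^n ⊆ ℝ × {−1,1} be a dataset with x_1 < x_2 < … < x_n, and suppose θ = (w, b, v) satisfies the KKT conditions of the maximum-margin problem for a width-k depth-2 ReLU network on S. Let 1 ≤ a < b ≤ n be such that x_b > x_a ≥ 0 and y_i = 1 for all a ≤ i ≤ b, and let ℐ'_{a,b} = {i : a ≤ i ≤ b, y_i N_θ(x_i) = 1} be enumerated as i_1 < … < i_m. Then there are at most 30 points in the interval [x_{i_1}, x_{i_m}] at which N_θ is not locally affine (i.e., at most 30 boundaries between linear regions in [x_{i_1}, x_{i_m}]). -/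

import Mathlib

open Finset Filter

/-- The ReLU activation function. -/
noncomputable def relu (z : ℝ) : ℝ := max 0 z

/-- A width-`k` depth-2 ReLU network with weights `w`, biases `b`, output weights `v`. -/
noncomputable def NNet {k : ℕ} (w b v : Fin k → ℝ) (x : ℝ) : ℝ :=
  ∑ j : Fin k, v j * relu (w j * x + b j)

/-- `θ = (w, b, v)` satisfies the KKT conditions of the maximum-margin problem
for the dataset `(x i, y i)`. -/
def IsKKT {n k : ℕ} (x y : Fin n → ℝ) (w b v : Fin k → ℝ) : Prop :=
  (∀ i, 1 ≤ y i * NNet w b v (x i)) ∧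
  ∃ (lam : Fin n → ℝ) (sg : Fin n → Fin k → ℝ),
    (∀ i, 0 ≤ lam i) ∧
    (∀ i j, sg i j ∈ Set.Icc (0 : ℝ) 1) ∧
    (∀ i j, 0 < w j * x i + b j → sg i j = 1) ∧
    (∀ i j, w j * x i + b j < 0 → sg i j = 0) ∧
    (∀ i, y i * NNet w b v (x i) ≠ 1 → lam i = 0) ∧
    (∀ j, v j ≠ 0 → w j = ∑ i, lam i * y i * v j * sg i j * x i) ∧
    (∀ j, v j ≠ 0 → b j = ∑ i, lam i * y i * v j * sg i j)

/-- `f` is locally affine at `x`: it agrees with an affine function on a neighborhood of `x`. -/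
def LocallyAffineAt (f : ℝ → ℝ) (x : ℝ) : Prop :=
  ∃ c d : ℝ, ∀ᶠ z in nhds x, f z = c * z + d

/-- `x` is an activation point of the network `(w, b, v)`. -/
def IsActivationPoint {k : ℕ} (w b v : Fin k → ℝ) (x : ℝ) : Prop :=
  ∃ j : Fin k, v j ≠ 0 ∧ w j ≠ 0 ∧ w j * x + b j = 0

/-- The derivative of `f` decreases at `x`: for all sufficiently small `ε > 0`,
the derivative at `x + ε` is smaller than the derivative at `x - ε`. -/
def DerivDecreasesAt (f : ℝ → ℝ) (x : ℝ) : Prop :=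
  ∃ ε₀ > (0 : ℝ), ∀ ε : ℝ, 0 < ε → ε < ε₀ → deriv f (x + ε) < deriv f (x - ε)

/-- The derivative of `f` increases at `x`: for all sufficiently small `ε > 0`,
the derivative at `x - ε` is smaller than the derivative at `x + ε`. -/
def DerivIncreasesAt (f : ℝ → ℝ) (x : ℝ) : Prop :=
  ∃ ε₀ > (0 : ℝ), ∀ ε : ℝ, 0 < ε → ε < ε₀ → deriv f (x - ε) < deriv f (x + ε)

noncomputable def SR {k : ℕ} (w b v : Fin k → ℝ) (p : ℝ) : ℝ :=
  ∑ j, v j * (if 0 < w j * p + b j ∨ (w j * p + b j = 0 ∧ 0 < w j) then w j else 0)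

noncomputable def SL {k : ℕ} (w b v : Fin k → ℝ) (p : ℝ) : ℝ :=
  ∑ j, v j * (if 0 < w j * p + b j ∨ (w j * p + b j = 0 ∧ w j < 0) then w j else 0)

lemma relu_of_nonneg {t : ℝ} (h : 0 ≤ t) : relu t = t := max_eq_right h
lemma relu_of_nonpos {t : ℝ} (h : t ≤ 0) : relu t = 0 := max_eq_left h

lemma ev_right {k : ℕ} (w b v : Fin k → ℝ) (p : ℝ) :
    ∀ᶠ z in nhdsWithin p (Set.Ioi p),
      NNet w b v z = NNet w b v p + SR w b v p * (z - p) := by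
  have H : ∀ j : Fin k, ∀ᶠ z in nhdsWithin p (Set.Ioi p),
      v j * relu (w j * z + b j) = v j * relu (w j * p + b j)
        + (v j * (if 0 < w j * p + b j ∨ (w j * p + b j = 0 ∧ 0 < w j) then w j else 0)) * (z - p) := by
    intro j
    have hc : Continuous fun z : ℝ => w j * z + b j := by continuity
    rcases lt_trichotomy (w j * p + b j) 0 with h | h | h
    · have hev : ∀ᶠ z in nhdsWithin p (Set.Ioi p), w j * z + b j < 0 :=
        eventually_nhdsWithin_of_eventually_nhds
          (hc.continuousAt.eventually_lt continuousAt_const h)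
      filter_upwards [hev] with z hz
      rw [relu_of_nonpos hz.le, relu_of_nonpos h.le,
        if_neg (by push_neg; exact ⟨h.le, fun h' => absurd h' (ne_of_lt h)⟩)]
      ring
    · rcases lt_trichotomy (w j) 0 with hw | hw | hw
      · filter_upwards [self_mem_nhdsWithin] with z hz
        have hz' : w j * z + b j ≤ 0 := by nlinarith [Set.mem_Ioi.mp hz]
        rw [relu_of_nonpos hz', relu_of_nonpos h.le,
          if_neg (by push_neg; exact ⟨by rw [h], fun _ => hw.le⟩)]
        ring
      · filter_upwards [self_mem_nhdsWithin] with z hz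
        have hz' : w j * z + b j = 0 := by rw [hw] at h ⊢; linarith
        rw [relu_of_nonpos hz'.le, relu_of_nonpos h.le,
          if_neg (by push_neg; exact ⟨by rw [h], fun _ => hw.le⟩)]
        ring
      · filter_upwards [self_mem_nhdsWithin] with z hz
        have hz0 : w j * z + b j = w j * (z - p) := by linarith
        have hz' : 0 ≤ w j * z + b j := by
          rw [hz0]; have := Set.mem_Ioi.mp hz; nlinarith
        rw [relu_of_nonneg hz', relu_of_nonpos h.le, if_pos (Or.inr ⟨h, hw⟩), hz0]
        ring
    · have hev : ∀ᶠ z in nhdsWithin p (Set.Ioi p), 0 < w j * z + b j :=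
        eventually_nhdsWithin_of_eventually_nhds
          (continuousAt_const.eventually_lt hc.continuousAt h)
      filter_upwards [hev] with z hz
      rw [relu_of_nonneg hz.le, relu_of_nonneg h.le, if_pos (Or.inl h)]
      ring
  filter_upwards [eventually_all.mpr H] with z hz
  calc NNet w b v z
      = ∑ j, (v j * relu (w j * p + b j)
          + (v j * (if 0 < w j * p + b j ∨ (w j * p + b j = 0 ∧ 0 < w j) then w j else 0)) * (z - p)) :=
        Finset.sum_congr rfl (fun j _ => hz j)
    _ = NNet w b v p + SR w b v p * (z - p) := by
        rw [Finset.sum_add_distrib, ← Finset.sum_mul]; rfl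

lemma ev_left {k : ℕ} (w b v : Fin k → ℝ) (p : ℝ) :
    ∀ᶠ z in nhdsWithin p (Set.Iio p),
      NNet w b v z = NNet w b v p + SL w b v p * (z - p) := by
  have H : ∀ j : Fin k, ∀ᶠ z in nhdsWithin p (Set.Iio p),
      v j * relu (w j * z + b j) = v j * relu (w j * p + b j)
        + (v j * (if 0 < w j * p + b j ∨ (w j * p + b j = 0 ∧ w j < 0) then w j else 0)) * (z - p) := by
    intro j
    have hc : Continuous fun z : ℝ => w j * z + b j := by continuity
    rcases lt_trichotomy (w j * p + b j) 0 with h | h | h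
    · have hev : ∀ᶠ z in nhdsWithin p (Set.Iio p), w j * z + b j < 0 :=
        eventually_nhdsWithin_of_eventually_nhds
          (hc.continuousAt.eventually_lt continuousAt_const h)
      filter_upwards [hev] with z hz
      rw [relu_of_nonpos hz.le, relu_of_nonpos h.le,
        if_neg (by push_neg; exact ⟨h.le, fun h' => absurd h' (ne_of_lt h)⟩)]
      ring
    · rcases lt_trichotomy (w j) 0 with hw | hw | hw
      · filter_upwards [self_mem_nhdsWithin] with z hz
        have hz0 : w j * z + b j = w j * (z - p) := by linarith
        have hz' : 0 ≤ w j * z + b j := by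
          rw [hz0]; have := Set.mem_Iio.mp hz; nlinarith
        rw [relu_of_nonneg hz', relu_of_nonpos h.le, if_pos (Or.inr ⟨h, hw⟩), hz0]
        ring
      · filter_upwards [self_mem_nhdsWithin] with z hz
        have hz' : w j * z + b j = 0 := by rw [hw] at h ⊢; linarith
        rw [relu_of_nonpos hz'.le, relu_of_nonpos h.le,
          if_neg (by push_neg; exact ⟨by rw [h], fun _ => hw.ge⟩)]
        ring
      · filter_upwards [self_mem_nhdsWithin] with z hz
        have hz' : w j * z + b j ≤ 0 := by nlinarith [Set.mem_Iio.mp hz]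
        rw [relu_of_nonpos hz', relu_of_nonpos h.le,
          if_neg (by push_neg; exact ⟨by rw [h], fun _ => hw.le⟩)]
        ring
    · have hev : ∀ᶠ z in nhdsWithin p (Set.Iio p), 0 < w j * z + b j :=
        eventually_nhdsWithin_of_eventually_nhds
          (continuousAt_const.eventually_lt hc.continuousAt h)
      filter_upwards [hev] with z hz
      rw [relu_of_nonneg hz.le, relu_of_nonneg h.le, if_pos (Or.inl h)]
      ring
  filter_upwards [eventually_all.mpr H] with z hz
  calc NNet w b v z
      = ∑ j, (v j * relu (w j * p + b j)
          + (v j * (if 0 < w j * p + b j ∨ (w j * p + b j = 0 ∧ w j < 0) then w j else 0)) * (z - p)) :=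
        Finset.sum_congr rfl (fun j _ => hz j)
    _ = NNet w b v p + SL w b v p * (z - p) := by
        rw [Finset.sum_add_distrib, ← Finset.sum_mul]; rfl

lemma affine_unique_right {p c1 d1 c2 d2 : ℝ}
    (h : ∀ᶠ z in nhdsWithin p (Set.Ioi p), c1 * z + d1 = c2 * z + d2) :
    c1 = c2 ∧ d1 = d2 := by
  obtain ⟨z1, hz1, hz1p⟩ := (h.and self_mem_nhdsWithin).exists
  have h2 : ∀ᶠ z in nhdsWithin p (Set.Ioi p), z ∈ Set.Ioo p z1 :=
    Ioo_mem_nhdsGT_of_mem (Set.mem_Ico.mpr ⟨le_refl p, hz1p⟩)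
  obtain ⟨z2, hz2, hz2'⟩ := (h.and h2).exists
  have hne : z1 ≠ z2 := fun he => absurd hz2'.2 (by rw [← he]; exact lt_irrefl z1)
  have e1 : (c1 - c2) * z1 = d2 - d1 := by linarith
  have e2 : (c1 - c2) * z2 = d2 - d1 := by linarith
  have hc : c1 = c2 := by
    by_contra hc
    exact hne (mul_left_cancel₀ (sub_ne_zero.mpr hc) (e1.trans e2.symm))
  refine ⟨hc, ?_⟩
  rw [hc, sub_self, zero_mul] at e1
  linarith

lemma affine_unique_left {p c1 d1 c2 d2 : ℝ}
    (h : ∀ᶠ z in nhdsWithin p (Set.Iio p), c1 * z + d1 = c2 * z + d2) :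
    c1 = c2 ∧ d1 = d2 := by
  obtain ⟨z1, hz1, hz1p⟩ := (h.and self_mem_nhdsWithin).exists
  have h2 : ∀ᶠ z in nhdsWithin p (Set.Iio p), z ∈ Set.Ioo z1 p :=
    Ioo_mem_nhdsLT_of_mem (Set.mem_Ioc.mpr ⟨hz1p, le_refl p⟩)
  obtain ⟨z2, hz2, hz2'⟩ := (h.and h2).exists
  have hne : z1 ≠ z2 := fun he => absurd hz2'.1 (by rw [← he]; exact lt_irrefl z1)
  have e1 : (c1 - c2) * z1 = d2 - d1 := by linarith
  have e2 : (c1 - c2) * z2 = d2 - d1 := by linarith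
  have hc : c1 = c2 := by
    by_contra hc
    exact hne (mul_left_cancel₀ (sub_ne_zero.mpr hc) (e1.trans e2.symm))
  refine ⟨hc, ?_⟩
  rw [hc, sub_self, zero_mul] at e1
  linarith

lemma locallyAffineAt_iff {k : ℕ} (w b v : Fin k → ℝ) (p : ℝ) :
    LocallyAffineAt (NNet w b v) p ↔ SL w b v p = SR w b v p := by
  constructor
  · rintro ⟨c, d, hcd⟩
    have hr := (ev_right w b v p).and (hcd.filter_mono nhdsWithin_le_nhds)
    have hl := (ev_left w b v p).and (hcd.filter_mono nhdsWithin_le_nhds)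
    have hr' : ∀ᶠ z in nhdsWithin p (Set.Ioi p),
        SR w b v p * z + (NNet w b v p - SR w b v p * p) = c * z + d := by
      filter_upwards [hr] with z hz
      linarith [hz.1, hz.2]
    have hl' : ∀ᶠ z in nhdsWithin p (Set.Iio p),
        SL w b v p * z + (NNet w b v p - SL w b v p * p) = c * z + d := by
      filter_upwards [hl] with z hz
      linarith [hz.1, hz.2]
    rw [(affine_unique_left hl').1, (affine_unique_right hr').1]
  · intro hSL
    refine ⟨SR w b v p, NNet w b v p - SR w b v p * p, ?_⟩
    have hr : ∀ᶠ z in nhdsWithin p (Set.Ioi p),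
        NNet w b v z = SR w b v p * z + (NNet w b v p - SR w b v p * p) := by
      filter_upwards [ev_right w b v p] with z hz; linarith
    have hl : ∀ᶠ z in nhdsWithin p (Set.Iio p),
        NNet w b v z = SR w b v p * z + (NNet w b v p - SR w b v p * p) := by
      filter_upwards [ev_left w b v p] with z hz; rw [hSL] at hz; linarith
    have hp : NNet w b v p = SR w b v p * p + (NNet w b v p - SR w b v p * p) := by ring
    rw [← nhdsNE_sup_pure p, ← nhdsLT_sup_nhdsGT p,
      eventually_sup, eventually_sup, eventually_pure]
    exact ⟨⟨hl, hr⟩, hp⟩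


lemma neuron_piece {k : ℕ} (w b v : Fin k → ℝ) {s t : ℝ} (hst : s < t)
    (hfree : ∀ z ∈ Set.Ioo s t, ¬ IsActivationPoint w b v z) (j : Fin k) (hv : v j ≠ 0) :
    (∀ z ∈ Set.Icc s t, relu (w j * z + b j) = relu (w j * s + b j)
        + (if 0 < w j * s + b j ∨ (w j * s + b j = 0 ∧ 0 < w j) then w j else 0) * (z - s))
    ∧ ((if 0 < w j * s + b j ∨ (w j * s + b j = 0 ∧ 0 < w j) then w j else 0)
      = (if 0 < w j * t + b j ∨ (w j * t + b j = 0 ∧ w j < 0) then w j else 0))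
    ∧ ∀ z ∈ Set.Ioo s t,
      ((if 0 < w j * z + b j ∨ (w j * z + b j = 0 ∧ 0 < w j) then w j else 0)
        = (if 0 < w j * s + b j ∨ (w j * s + b j = 0 ∧ 0 < w j) then w j else 0)
      ∧ (if 0 < w j * z + b j ∨ (w j * z + b j = 0 ∧ w j < 0) then w j else 0)
        = (if 0 < w j * s + b j ∨ (w j * s + b j = 0 ∧ 0 < w j) then w j else 0)) := by
  by_cases hw : w j = 0
  · have hg : ∀ z : ℝ, w j * z + b j = w j * s + b j := by intro z; rw [hw]; ring
    refine ⟨fun z _ => by rw [hg z]; simp [hw],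
      by rw [hg t]; simp [hw], fun z _ => by rw [hg z]; simp [hw]⟩
  have hc : Continuous fun z : ℝ => w j * z + b j := by continuity
  have key : (∀ z ∈ Set.Ioo s t, 0 < w j * z + b j) ∨ (∀ z ∈ Set.Ioo s t, w j * z + b j < 0) := by
    by_contra hk
    push_neg at hk
    obtain ⟨⟨z1, hz1, hg1⟩, ⟨z2, hz2, hg2⟩⟩ := hk
    have hact : ∀ z0 ∈ Set.Ioo s t, w j * z0 + b j = 0 → False := fun z0 hz0 h0 =>
      hfree z0 hz0 ⟨j, hv, hw, h0⟩
    rcases lt_trichotomy z1 z2 with h12 | h12 | h12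
    · obtain ⟨z0, hz0, hgz0⟩ := intermediate_value_Icc h12.le (hc.continuousOn)
        (Set.mem_Icc.mpr ⟨hg1, hg2⟩)
      exact hact z0 ⟨lt_of_lt_of_le hz1.1 hz0.1, lt_of_le_of_lt hz0.2 hz2.2⟩ hgz0
    · exact hact z1 hz1 (le_antisymm hg1 (h12 ▸ hg2))
    · obtain ⟨z0, hz0, hgz0⟩ := intermediate_value_Icc' h12.le (hc.continuousOn)
        (Set.mem_Icc.mpr ⟨hg1, hg2⟩)
      exact hact z0 ⟨lt_of_lt_of_le hz2.1 hz0.1, lt_of_le_of_lt hz0.2 hz1.2⟩ hgz0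
  have hmid : (s + t) / 2 ∈ Set.Ioo s t := ⟨by linarith, by linarith⟩
  rcases key with hpos | hneg
  · have hgmid := hpos _ hmid
    have hs0 : 0 ≤ w j * s + b j := by
      by_contra hs0
      rw [not_le] at hs0
      obtain ⟨z0, hz0, hgz0⟩ := intermediate_value_Icc (by linarith : s ≤ (s+t)/2)
        (hc.continuousOn) (Set.mem_Icc.mpr ⟨hs0.le, hgmid.le⟩)
      have hgz0 : w j * z0 + b j = 0 := hgz0
      have hz0s : s < z0 := lt_of_le_of_ne hz0.1 (fun he => by rw [← he] at hgz0; linarith)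
      exact absurd hgz0 (ne_of_gt (hpos z0 ⟨hz0s, lt_of_le_of_lt hz0.2 hmid.2⟩))
    have ht0 : 0 ≤ w j * t + b j := by
      by_contra ht0
      rw [not_le] at ht0
      obtain ⟨z0, hz0, hgz0⟩ := intermediate_value_Icc' (by linarith : (s+t)/2 ≤ t)
        (hc.continuousOn) (Set.mem_Icc.mpr ⟨ht0.le, hgmid.le⟩)
      have hgz0 : w j * z0 + b j = 0 := hgz0
      have hz0t : z0 < t := lt_of_le_of_ne hz0.2 (fun he => by rw [he] at hgz0; linarith)
      exact absurd hgz0 (ne_of_gt (hpos z0 ⟨lt_of_lt_of_le hmid.1 hz0.1, hz0t⟩))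
    have hall : ∀ z ∈ Set.Icc s t, 0 ≤ w j * z + b j := by
      intro z hz
      rcases eq_or_lt_of_le hz.1 with h1 | h1
      · rw [← h1]; exact hs0
      rcases eq_or_lt_of_le hz.2 with h2 | h2
      · rw [h2]; exact ht0
      exact (hpos z ⟨h1, h2⟩).le
    have hrRs : (if 0 < w j * s + b j ∨ (w j * s + b j = 0 ∧ 0 < w j) then w j else 0) = w j := by
      rcases eq_or_lt_of_le hs0 with h | h
      · have hwpos : 0 < w j := by nlinarith [hmid.1]
        exact if_pos (Or.inr ⟨h.symm, hwpos⟩)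
      · exact if_pos (Or.inl h)
    have hrLt : (if 0 < w j * t + b j ∨ (w j * t + b j = 0 ∧ w j < 0) then w j else 0) = w j := by
      rcases eq_or_lt_of_le ht0 with h | h
      · have hwneg : w j < 0 := by nlinarith [hmid.2]
        exact if_pos (Or.inr ⟨h.symm, hwneg⟩)
      · exact if_pos (Or.inl h)
    refine ⟨fun z hz => ?_, by rw [hrRs, hrLt], fun z hz => ?_⟩
    · rw [relu_of_nonneg (hall z hz), relu_of_nonneg hs0, hrRs]; ring
    · rw [hrRs, if_pos (Or.inl (hpos z hz)), if_pos (Or.inl (hpos z hz))]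
      exact ⟨rfl, rfl⟩
  · have hgmid := hneg _ hmid
    have hs0 : w j * s + b j ≤ 0 := by
      by_contra hs0
      rw [not_le] at hs0
      obtain ⟨z0, hz0, hgz0⟩ := intermediate_value_Icc' (by linarith : s ≤ (s+t)/2)
        (hc.continuousOn) (Set.mem_Icc.mpr ⟨hgmid.le, hs0.le⟩)
      have hgz0 : w j * z0 + b j = 0 := hgz0
      have hz0s : s < z0 := lt_of_le_of_ne hz0.1 (fun he => by rw [← he] at hgz0; linarith)
      exact absurd hgz0 (ne_of_lt (hneg z0 ⟨hz0s, lt_of_le_of_lt hz0.2 hmid.2⟩))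
    have ht0 : w j * t + b j ≤ 0 := by
      by_contra ht0
      rw [not_le] at ht0
      obtain ⟨z0, hz0, hgz0⟩ := intermediate_value_Icc (by linarith : (s+t)/2 ≤ t)
        (hc.continuousOn) (Set.mem_Icc.mpr ⟨hgmid.le, ht0.le⟩)
      have hgz0 : w j * z0 + b j = 0 := hgz0
      have hz0t : z0 < t := lt_of_le_of_ne hz0.2 (fun he => by rw [he] at hgz0; linarith)
      exact absurd hgz0 (ne_of_lt (hneg z0 ⟨lt_of_lt_of_le hmid.1 hz0.1, hz0t⟩))
    have hall : ∀ z ∈ Set.Icc s t, w j * z + b j ≤ 0 := by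
      intro z hz
      rcases eq_or_lt_of_le hz.1 with h1 | h1
      · rw [← h1]; exact hs0
      rcases eq_or_lt_of_le hz.2 with h2 | h2
      · rw [h2]; exact ht0
      exact (hneg z ⟨h1, h2⟩).le
    have hrRs : (if 0 < w j * s + b j ∨ (w j * s + b j = 0 ∧ 0 < w j) then w j else 0) = 0 := by
      apply if_neg
      push_neg
      refine ⟨hs0, fun h => ?_⟩
      nlinarith [hmid.1]
    have hrLt : (if 0 < w j * t + b j ∨ (w j * t + b j = 0 ∧ w j < 0) then w j else 0) = 0 := by
      apply if_neg
      push_neg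
      refine ⟨ht0, fun h => ?_⟩
      nlinarith [hmid.2]
    refine ⟨fun z hz => ?_, by rw [hrRs, hrLt], fun z hz => ?_⟩
    · rw [relu_of_nonpos (hall z hz), relu_of_nonpos hs0, hrRs]; ring
    · have h1 : ¬ (0 < w j * z + b j ∨ (w j * z + b j = 0 ∧ 0 < w j)) := by
        push_neg; exact ⟨(hneg z hz).le, fun h => absurd h (ne_of_lt (hneg z hz))⟩
      have h2 : ¬ (0 < w j * z + b j ∨ (w j * z + b j = 0 ∧ w j < 0)) := by
        push_neg; exact ⟨(hneg z hz).le, fun h => absurd h (ne_of_lt (hneg z hz))⟩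
      rw [if_neg h1, if_neg h2, hrRs]
      exact ⟨rfl, rfl⟩

lemma aff_val {k : ℕ} (w b v : Fin k → ℝ) {s t : ℝ} (hst : s < t)
    (hfree : ∀ z ∈ Set.Ioo s t, ¬ IsActivationPoint w b v z) :
    ∀ z ∈ Set.Icc s t, NNet w b v z = NNet w b v s + SR w b v s * (z - s) := by
  intro z hz
  have : ∀ j : Fin k, v j * relu (w j * z + b j) = v j * relu (w j * s + b j)
      + (v j * (if 0 < w j * s + b j ∨ (w j * s + b j = 0 ∧ 0 < w j) then w j else 0)) * (z - s) := by
    intro j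
    by_cases hv : v j = 0
    · simp [hv]
    · rw [(neuron_piece w b v hst hfree j hv).1 z hz]; ring
  calc NNet w b v z = ∑ j, (v j * relu (w j * s + b j)
      + (v j * (if 0 < w j * s + b j ∨ (w j * s + b j = 0 ∧ 0 < w j) then w j else 0)) * (z - s)) :=
        Finset.sum_congr rfl (fun j _ => this j)
    _ = NNet w b v s + SR w b v s * (z - s) := by
        rw [Finset.sum_add_distrib, ← Finset.sum_mul]; rfl

lemma aff_SRSL {k : ℕ} (w b v : Fin k → ℝ) {s t : ℝ} (hst : s < t)
    (hfree : ∀ z ∈ Set.Ioo s t, ¬ IsActivationPoint w b v z) :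
    SR w b v s = SL w b v t :=
  Finset.sum_congr rfl (fun j _ => by
    by_cases hv : v j = 0
    · simp [hv]
    · rw [(neuron_piece w b v hst hfree j hv).2.1])

lemma aff_mid {k : ℕ} (w b v : Fin k → ℝ) {s t : ℝ} (hst : s < t)
    (hfree : ∀ z ∈ Set.Ioo s t, ¬ IsActivationPoint w b v z) :
    ∀ z ∈ Set.Ioo s t, SR w b v z = SR w b v s ∧ SL w b v z = SR w b v s := by
  intro z hz
  constructor
  · exact Finset.sum_congr rfl (fun j _ => by
      by_cases hv : v j = 0
      · simp [hv]
      · rw [((neuron_piece w b v hst hfree j hv).2.2 z hz).1])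
  · exact Finset.sum_congr rfl (fun j _ => by
      by_cases hv : v j = 0
      · simp [hv]
      · rw [((neuron_piece w b v hst hfree j hv).2.2 z hz).2])


/-- sum over data strictly right of `p`, of `lam*y*(x*t+1)` -/
noncomputable def Fgt {n : ℕ} (x y lam : Fin n → ℝ) (p t : ℝ) : ℝ :=
  ∑ i, if p < x i then lam i * y i * (x i * t + 1) else 0
noncomputable def FgtX {n : ℕ} (x y lam : Fin n → ℝ) (p : ℝ) : ℝ :=
  ∑ i, if p < x i then lam i * y i * x i else 0
noncomputable def Flt {n : ℕ} (x y lam : Fin n → ℝ) (p t : ℝ) : ℝ :=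
  ∑ i, if x i < p then lam i * y i * (x i * t + 1) else 0
noncomputable def FltX {n : ℕ} (x y lam : Fin n → ℝ) (p : ℝ) : ℝ :=
  ∑ i, if x i < p then lam i * y i * x i else 0
noncomputable def LamAt {n : ℕ} (x lam : Fin n → ℝ) (p : ℝ) : ℝ :=
  ∑ i, if x i = p then lam i else 0

def Rcond {n : ℕ} (x y lam : Fin n → ℝ) (p A β : ℝ) : Prop :=
  0 ≤ β ∧ β ≤ LamAt x lam p ∧ Fgt x y lam p p + (p^2+1)*β = 0 ∧
    A = FgtX x y lam p + p*β ∧ A ≠ 0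

def Lcond {n : ℕ} (x y lam : Fin n → ℝ) (p A β : ℝ) : Prop :=
  0 ≤ β ∧ β ≤ LamAt x lam p ∧ Flt x y lam p p + (p^2+1)*β = 0 ∧
    A = FltX x y lam p + p*β ∧ A ≠ 0

lemma Fgt_affine {n : ℕ} (x y lam : Fin n → ℝ) (p t t' : ℝ) :
    Fgt x y lam p t = Fgt x y lam p t' + (t - t') * FgtX x y lam p := by
  rw [Fgt, Fgt, FgtX, Finset.mul_sum, ← Finset.sum_add_distrib]
  refine Finset.sum_congr rfl (fun i _ => ?_)
  by_cases h : p < x i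
  · rw [if_pos h, if_pos h, if_pos h]; ring
  · rw [if_neg h, if_neg h, if_neg h]; ring

lemma Flt_affine {n : ℕ} (x y lam : Fin n → ℝ) (p t t' : ℝ) :
    Flt x y lam p t = Flt x y lam p t' + (t - t') * FltX x y lam p := by
  rw [Flt, Flt, FltX, Finset.mul_sum, ← Finset.sum_add_distrib]
  refine Finset.sum_congr rfl (fun i _ => ?_)
  by_cases h : x i < p
  · rw [if_pos h, if_pos h, if_pos h]; ring
  · rw [if_neg h, if_neg h, if_neg h]; ring

/-- right-sum comparison across `[p,q]` (positive block). -/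
lemma Fgt_drop {n : ℕ} (x y lam : Fin n → ℝ) {p q : ℝ} (hp : 0 ≤ p) (hpq : p < q)
    (hl : ∀ i, 0 ≤ lam i) (hyb : ∀ i, p ≤ x i → x i ≤ q → y i = 1) :
    Fgt x y lam q q + (q^2+1) * LamAt x lam q ≤ Fgt x y lam p q := by
  have expand : Fgt x y lam q q + (q^2+1) * LamAt x lam q
      = ∑ i, ((if q < x i then lam i * y i * (x i * q + 1) else 0)
          + (q^2+1) * (if x i = q then lam i else 0)) := by
    rw [Fgt, LamAt, Finset.mul_sum, ← Finset.sum_add_distrib]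
  rw [expand, Fgt]
  apply Finset.sum_le_sum
  intro i _
  rcases lt_trichotomy q (x i) with h1 | h1 | h1
  · rw [if_pos h1, if_neg (by intro he; rw [he] at h1; exact lt_irrefl _ h1),
      if_pos (lt_trans hpq h1)]
    ring_nf
    exact le_refl _
  · have hxq : x i = q := h1.symm
    have hy : y i = 1 := hyb i (by linarith [hxq.ge]) hxq.le
    rw [if_neg (by rw [hxq]; exact lt_irrefl q), if_pos hxq, if_pos (by rw [hxq]; exact hpq), hy, hxq]
    ring_nf
    exact le_refl _
  · rw [if_neg (by intro hc; linarith), if_neg (by intro he; rw [he] at h1; exact lt_irrefl _ h1)]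
    by_cases h2 : p < x i
    · rw [if_pos h2]
      have hy : y i = 1 := hyb i h2.le h1.le
      rw [hy]
      have : 0 ≤ x i * q := mul_nonneg (by linarith) (by linarith)
      have := hl i
      nlinarith
    · rw [if_neg h2]; ring_nf; exact le_refl _

/-- left-sum comparison across `[p,q]` (positive block). -/
lemma Flt_drop {n : ℕ} (x y lam : Fin n → ℝ) {p q : ℝ} (hp : 0 ≤ p) (hpq : p < q)
    (hl : ∀ i, 0 ≤ lam i) (hyb : ∀ i, p ≤ x i → x i ≤ q → y i = 1) :
    Flt x y lam p q + (p*q+1) * LamAt x lam p ≤ Flt x y lam q q := by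
  have expand : Flt x y lam p q + (p*q+1) * LamAt x lam p
      = ∑ i, ((if x i < p then lam i * y i * (x i * q + 1) else 0)
          + (p*q+1) * (if x i = p then lam i else 0)) := by
    rw [Flt, LamAt, Finset.mul_sum, ← Finset.sum_add_distrib]
  rw [expand, Flt]
  apply Finset.sum_le_sum
  intro i _
  rcases lt_trichotomy (x i) p with h1 | h1 | h1
  · rw [if_pos h1, if_neg (by intro he; rw [he] at h1; exact lt_irrefl _ h1),
      if_pos (lt_trans h1 hpq)]
    ring_nf
    exact le_refl _
  · have hy : y i = 1 := hyb i h1.ge (h1.le.trans hpq.le)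
    rw [if_neg (by rw [h1]; exact lt_irrefl p), if_pos h1, if_pos (by rw [h1]; exact hpq), hy, h1]
    ring_nf
    exact le_refl _
  · rw [if_neg (by intro hc; linarith), if_neg (by intro he; rw [he] at h1; exact lt_irrefl _ h1)]
    by_cases h2 : x i < q
    · rw [if_pos h2]
      have hy : y i = 1 := hyb i h1.le h2.le
      rw [hy]
      have : 0 ≤ x i * q := mul_nonneg (by linarith) (by linarith)
      have := hl i
      nlinarith
    · rw [if_neg h2]; ring_nf; exact le_refl _

/-- no two "R-type" kinks with the left one concave. -/
lemma pair_RR {n : ℕ} (x y lam : Fin n → ℝ) {p q A β A' β' : ℝ}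
    (hp : 0 ≤ p) (hpq : p < q) (hl : ∀ i, 0 ≤ lam i)
    (hyb : ∀ i, p ≤ x i → x i ≤ q → y i = 1)
    (h1 : Rcond x y lam p A β) (hA : A < 0) (h2 : Rcond x y lam q A' β') : False := by
  obtain ⟨hb0, hbL, heq, hAv, -⟩ := h1
  obtain ⟨hb0', hbL', heq', -, -⟩ := h2
  have hq : 0 ≤ q := le_trans hp hpq.le
  have key1 : Fgt x y lam p q = (q - p) * A - (p*q+1) * β := by
    rw [Fgt_affine x y lam p q p]
    have : FgtX x y lam p = A - p * β := by rw [hAv]; ring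
    rw [this]
    nlinarith [heq]
  have key2 : Fgt x y lam q q + (q^2+1) * LamAt x lam q ≤ Fgt x y lam p q :=
    Fgt_drop x y lam hp hpq hl hyb
  have hq1 : (0:ℝ) < q^2+1 := by positivity
  have hLq : (q^2+1) * β' ≤ (q^2+1) * LamAt x lam q := mul_le_mul_of_nonneg_left hbL' hq1.le
  have hpq1 : (0:ℝ) < p*q+1 := by nlinarith
  have t1 : (q-p)*A < 0 := mul_neg_of_pos_of_neg (by linarith) hA
  have t2 : (0:ℝ) ≤ (p*q+1)*β := mul_nonneg hpq1.le hb0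
  have hneg : Fgt x y lam p q < 0 := by rw [key1]; linarith
  linarith

/-- no two "L-type" kinks with the left one concave. -/
lemma pair_LL {n : ℕ} (x y lam : Fin n → ℝ) {p q A β A' β' : ℝ}
    (hp : 0 ≤ p) (hpq : p < q) (hl : ∀ i, 0 ≤ lam i)
    (hyb : ∀ i, p ≤ x i → x i ≤ q → y i = 1)
    (h1 : Lcond x y lam p A β) (hA : 0 < A) (h2 : Lcond x y lam q A' β') : False := by
  obtain ⟨hb0, hbL, heq, hAv, -⟩ := h1
  obtain ⟨hb0', hbL', heq', -, -⟩ := h2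
  have key1 : Flt x y lam p q = (q - p) * A - (p*q+1) * β := by
    rw [Flt_affine x y lam p q p]
    have : FltX x y lam p = A - p * β := by rw [hAv]; ring
    rw [this]
    nlinarith [heq]
  have key2 : Flt x y lam p q + (p*q+1) * LamAt x lam p ≤ Flt x y lam q q :=
    Flt_drop x y lam hp hpq hl hyb
  have hpq1 : (0:ℝ) < p*q+1 := by nlinarith
  have hLp : (p*q+1) * β ≤ (p*q+1) * LamAt x lam p := mul_le_mul_of_nonneg_left hbL hpq1.le
  have t1 : 0 < (q-p)*A := mul_pos (by linarith) hA
  have hpos : 0 < Flt x y lam q q := by nlinarith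
  have t2 : (0:ℝ) ≤ (q^2+1)*β' := mul_nonneg (by positivity) hb0'
  linarith

/-- no two R-kinks in a support-free region. -/
lemma pair_zero_R {n : ℕ} (x y lam : Fin n → ℝ) {p q A β A' β' : ℝ}
    (hpq : p < q) (hz : ∀ i, p ≤ x i → x i ≤ q → lam i = 0)
    (h1 : Rcond x y lam p A β) (h2 : Rcond x y lam q A' β') : False := by
  obtain ⟨hb0, hbL, heq, hAv, hA0⟩ := h1
  obtain ⟨hb0', hbL', heq', -, -⟩ := h2
  have hLp : LamAt x lam p = 0 := Finset.sum_eq_zero (fun i _ => by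
    by_cases h : x i = p
    · rw [if_pos h, hz i h.ge (by rw [h]; exact hpq.le)]
    · rw [if_neg h])
  have hLq : LamAt x lam q = 0 := Finset.sum_eq_zero (fun i _ => by
    by_cases h : x i = q
    · rw [if_pos h, hz i (by rw [h]; exact hpq.le) h.le]
    · rw [if_neg h])
  have hβ : β = 0 := le_antisymm (hLp ▸ hbL) hb0
  have hβ' : β' = 0 := le_antisymm (hLq ▸ hbL') hb0'
  have hFp : Fgt x y lam p p = 0 := by rw [hβ] at heq; linarith
  have hFq : Fgt x y lam q q = 0 := by rw [hβ'] at heq'; linarith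
  have hmid : Fgt x y lam p q = Fgt x y lam q q := by
    refine Finset.sum_congr rfl (fun i _ => ?_)
    by_cases h1' : q < x i
    · rw [if_pos h1', if_pos (lt_trans hpq h1')]
    · by_cases h2' : p < x i
      · rw [if_pos h2', if_neg h1', hz i h2'.le (not_lt.mp h1')]
        ring
      · rw [if_neg h2', if_neg h1']
  have : Fgt x y lam p q = (q - p) * A := by
    rw [Fgt_affine x y lam p q p, hFp, hAv, hβ]
    ring
  have hA : A = 0 := by
    have h0 : (q - p) * A = 0 := by rw [← this, hmid, hFq]
    rcases mul_eq_zero.mp h0 with h | h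
    · linarith
    · exact h
  exact hA0 hA

/-- no two L-kinks in a support-free region. -/
lemma pair_zero_L {n : ℕ} (x y lam : Fin n → ℝ) {p q A β A' β' : ℝ}
    (hpq : p < q) (hz : ∀ i, p ≤ x i → x i ≤ q → lam i = 0)
    (h1 : Lcond x y lam p A β) (h2 : Lcond x y lam q A' β') : False := by
  obtain ⟨hb0, hbL, heq, hAv, hA0⟩ := h1
  obtain ⟨hb0', hbL', heq', -, -⟩ := h2
  have hLp : LamAt x lam p = 0 := Finset.sum_eq_zero (fun i _ => by
    by_cases h : x i = p
    · rw [if_pos h, hz i h.ge (by rw [h]; exact hpq.le)]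
    · rw [if_neg h])
  have hLq : LamAt x lam q = 0 := Finset.sum_eq_zero (fun i _ => by
    by_cases h : x i = q
    · rw [if_pos h, hz i (by rw [h]; exact hpq.le) h.le]
    · rw [if_neg h])
  have hβ : β = 0 := le_antisymm (hLp ▸ hbL) hb0
  have hβ' : β' = 0 := le_antisymm (hLq ▸ hbL') hb0'
  have hFp : Flt x y lam p p = 0 := by rw [hβ] at heq; linarith
  have hFq : Flt x y lam q q = 0 := by rw [hβ'] at heq'; linarith
  have hmid : Flt x y lam q q = Flt x y lam p q := by
    refine Finset.sum_congr rfl (fun i _ => ?_)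
    by_cases h1' : x i < p
    · rw [if_pos h1', if_pos (lt_trans h1' hpq)]
    · by_cases h2' : x i < q
      · rw [if_pos h2', if_neg h1', hz i (not_lt.mp h1') h2'.le]
        ring
      · rw [if_neg h2', if_neg h1']
  have : Flt x y lam p q = (q - p) * A := by
    rw [Flt_affine x y lam p q p, hFp, hAv, hβ]
    ring
  have hA : A = 0 := by
    have h0 : (q - p) * A = 0 := by rw [← this, ← hmid, hFq]
    rcases mul_eq_zero.mp h0 with h | h
    · linarith
    · exact h
  exact hA0 hA

/-- KKT extraction at an activation point. -/
lemma extract {n k : ℕ} (x y lam : Fin n → ℝ) (w b v : Fin k → ℝ) (sg : Fin n → Fin k → ℝ)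
    (hl : ∀ i, 0 ≤ lam i)
    (hsg01 : ∀ i j, sg i j ∈ Set.Icc (0:ℝ) 1)
    (hsg1 : ∀ i j, 0 < w j * x i + b j → sg i j = 1)
    (hsg0 : ∀ i j, w j * x i + b j < 0 → sg i j = 0)
    (hwf : ∀ j, v j ≠ 0 → w j = ∑ i, lam i * y i * v j * sg i j * x i)
    (hbf : ∀ j, v j ≠ 0 → b j = ∑ i, lam i * y i * v j * sg i j)
    {p : ℝ} (hyp : ∀ i, x i = p → y i = 1)
    {j : Fin k} (hvj : v j ≠ 0) (hwj : w j ≠ 0) (hgj : w j * p + b j = 0) :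
    ∃ A β, w j = v j * A ∧
      (0 < w j → Rcond x y lam p A β) ∧ (w j < 0 → Lcond x y lam p A β) := by
  set A := ∑ i, lam i * y i * sg i j * x i with hA
  set B := ∑ i, lam i * y i * sg i j with hB
  set β := ∑ i, (if x i = p then lam i * sg i j else 0) with hβdef
  have wA : w j = v j * A := by
    rw [hwf j hvj, hA, Finset.mul_sum]
    exact Finset.sum_congr rfl (fun i _ => by ring)
  have bB : b j = v j * B := by
    rw [hbf j hvj, hB, Finset.mul_sum]
    exact Finset.sum_congr rfl (fun i _ => by ring)
  have hab : A * p + B = 0 := by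
    have h0 : v j * (A * p + B) = 0 := by
      rw [show v j * (A * p + B) = (v j * A) * p + v j * B by ring, ← wA, ← bB]
      exact hgj
    rcases mul_eq_zero.mp h0 with h | h
    · exact absurd h hvj
    · exact h
  have hA0 : A ≠ 0 := fun h0 => hwj (by rw [wA, h0, mul_zero])
  have hbwp : b j = -(w j * p) := by linarith
  have gx : ∀ z : ℝ, w j * z + b j = w j * (z - p) := by intro z; rw [hbwp]; ring
  have hb0 : 0 ≤ β := Finset.sum_nonneg (fun i _ => by
    by_cases h : x i = p
    · rw [if_pos h]; exact mul_nonneg (hl i) (hsg01 i j).1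
    · rw [if_neg h])
  have hbL : β ≤ LamAt x lam p := Finset.sum_le_sum (fun i _ => by
    by_cases h : x i = p
    · rw [if_pos h, if_pos h]
      nlinarith [(hsg01 i j).2, hl i]
    · rw [if_neg h, if_neg h])
  refine ⟨A, β, wA, fun hwpos => ?_, fun hwneg => ?_⟩
  · have sgGT : ∀ i, p < x i → sg i j = 1 := fun i hi =>
      hsg1 i j (by rw [gx]; exact mul_pos hwpos (by linarith))
    have sgLT : ∀ i, x i < p → sg i j = 0 := fun i hi =>
      hsg0 i j (by rw [gx]; exact mul_neg_of_pos_of_neg hwpos (by linarith))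
    have key : ∀ t : ℝ, ∑ i, lam i * y i * sg i j * (x i * t + 1)
        = (∑ i, if p < x i then lam i * y i * (x i * t + 1) else 0)
          + (t * p + 1) * β := by
      intro t
      rw [hβdef, Finset.mul_sum, ← Finset.sum_add_distrib]
      refine Finset.sum_congr rfl (fun i _ => ?_)
      rcases lt_trichotomy p (x i) with h | h | h
      · rw [if_pos h, if_neg (by intro he; rw [he] at h; exact lt_irrefl _ h), sgGT i h]
        ring
      · rw [if_neg (h ▸ lt_irrefl p), if_pos h.symm, hyp i h.symm, ← h]
        ring
      · rw [if_neg (by intro hc; linarith), if_neg (by intro he; rw [he] at h; exact lt_irrefl _ h),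
          sgLT i h]
        ring
    have keyX : A = FgtX x y lam p + p * β := by
      rw [hA, hβdef, FgtX, Finset.mul_sum, ← Finset.sum_add_distrib]
      refine Finset.sum_congr rfl (fun i _ => ?_)
      rcases lt_trichotomy p (x i) with h | h | h
      · rw [if_pos h, if_neg (by intro he; rw [he] at h; exact lt_irrefl _ h), sgGT i h]
        ring
      · rw [if_neg (h ▸ lt_irrefl p), if_pos h.symm, hyp i h.symm, ← h]
        ring
      · rw [if_neg (by intro hc; linarith), if_neg (by intro he; rw [he] at h; exact lt_irrefl _ h),
          sgLT i h]
        ring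
    have hFeq : Fgt x y lam p p + (p^2+1) * β = 0 := by
      have h1 : ∑ i, lam i * y i * sg i j * (x i * p + 1) = A * p + B := by
        rw [hA, hB, Finset.sum_mul, ← Finset.sum_add_distrib]
        exact Finset.sum_congr rfl (fun i _ => by ring)
      have h2 := key p
      rw [h1, hab] at h2
      rw [Fgt, show (p:ℝ)^2+1 = p*p+1 by ring]
      linarith [h2]
    exact ⟨hb0, hbL, hFeq, keyX, hA0⟩
  · have sgGT : ∀ i, x i < p → sg i j = 1 := fun i hi =>
      hsg1 i j (by rw [gx]; exact mul_pos_of_neg_of_neg hwneg (by linarith))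
    have sgLT : ∀ i, p < x i → sg i j = 0 := fun i hi =>
      hsg0 i j (by rw [gx]; exact mul_neg_of_neg_of_pos hwneg (by linarith))
    have keyX : A = FltX x y lam p + p * β := by
      rw [hA, hβdef, FltX, Finset.mul_sum, ← Finset.sum_add_distrib]
      refine Finset.sum_congr rfl (fun i _ => ?_)
      rcases lt_trichotomy (x i) p with h | h | h
      · rw [if_pos h, if_neg (by intro he; rw [he] at h; exact lt_irrefl _ h), sgGT i h]
        ring
      · rw [if_neg (h ▸ lt_irrefl p), if_pos h, hyp i h, h]
        ring
      · rw [if_neg (by intro hc; linarith), if_neg (by intro he; rw [he] at h; exact lt_irrefl _ h),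
          sgLT i h]
        ring
    have hFeq : Flt x y lam p p + (p^2+1) * β = 0 := by
      have h1 : ∑ i, lam i * y i * sg i j * (x i * p + 1) = A * p + B := by
        rw [hA, hB, Finset.sum_mul, ← Finset.sum_add_distrib]
        exact Finset.sum_congr rfl (fun i _ => by ring)
      have key : ∑ i, lam i * y i * sg i j * (x i * p + 1)
          = (∑ i, if x i < p then lam i * y i * (x i * p + 1) else 0)
            + (p * p + 1) * β := by
        rw [hβdef, Finset.mul_sum, ← Finset.sum_add_distrib]
        refine Finset.sum_congr rfl (fun i _ => ?_)
        rcases lt_trichotomy (x i) p with h | h | h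
        · rw [if_pos h, if_neg (by intro he; rw [he] at h; exact lt_irrefl _ h), sgGT i h]
          ring
        · rw [if_neg (h ▸ lt_irrefl p), if_pos h, hyp i h, h]
          ring
        · rw [if_neg (by intro hc; linarith), if_neg (by intro he; rw [he] at h; exact lt_irrefl _ h),
            sgLT i h]
          ring
      rw [h1, hab] at key
      rw [Flt, show (p:ℝ)^2+1 = p*p+1 by ring]
      linarith [key]
    exact ⟨hb0, hbL, hFeq, keyX, hA0⟩


lemma bad_is_activation {k : ℕ} (w b v : Fin k → ℝ) (p : ℝ)
    (h : SL w b v p ≠ SR w b v p) : IsActivationPoint w b v p := by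
  by_contra hna
  apply h
  refine Finset.sum_congr rfl (fun j _ => ?_)
  by_cases hv : v j = 0
  · simp [hv]
  by_cases hg : w j * p + b j = 0
  · have hw : w j = 0 := by
      by_contra hw
      exact hna ⟨j, hv, hw, hg⟩
    rw [if_neg (by push_neg; exact ⟨by rw [hg], fun _ => hw.ge⟩),
      if_neg (by push_neg; exact ⟨by rw [hg], fun _ => hw.le⟩)]
  · have : (0 < w j * p + b j ∨ (w j * p + b j = 0 ∧ w j < 0))
        ↔ (0 < w j * p + b j ∨ (w j * p + b j = 0 ∧ 0 < w j)) := by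
      constructor
      · rintro (h' | ⟨he, -⟩)
        · exact Or.inl h'
        · exact absurd he hg
      · rintro (h' | ⟨he, -⟩)
        · exact Or.inl h'
        · exact absurd he hg
    rw [if_congr this rfl rfl]

lemma concave_neuron {k : ℕ} (w b v : Fin k → ℝ) (p : ℝ)
    (h : SR w b v p < SL w b v p) :
    ∃ j, v j ≠ 0 ∧ w j ≠ 0 ∧ w j * p + b j = 0 ∧
      ((0 < w j ∧ v j * w j < 0) ∨ (w j < 0 ∧ 0 < v j * w j)) := by
  have hsum : SR w b v p - SL w b v p < 0 := by linarith
  rw [SR, SL, ← Finset.sum_sub_distrib] at hsum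
  have hex : ∃ j, v j * (if 0 < w j * p + b j ∨ (w j * p + b j = 0 ∧ 0 < w j) then w j else 0)
      - v j * (if 0 < w j * p + b j ∨ (w j * p + b j = 0 ∧ w j < 0) then w j else 0) < 0 := by
    by_contra hc
    push_neg at hc
    exact absurd (Finset.sum_nonneg (fun j _ => hc j)) (not_le.mpr hsum)
  obtain ⟨j, hj⟩ := hex
  have hv : v j ≠ 0 := by
    intro hv; rw [hv] at hj; simp at hj
  by_cases hg : w j * p + b j = 0
  · rcases lt_trichotomy (w j) 0 with hw | hw | hw
    · rw [if_neg (by push_neg; exact ⟨by rw [hg], fun _ => hw.le⟩),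
        if_pos (Or.inr ⟨hg, hw⟩)] at hj
      refine ⟨j, hv, hw.ne, hg, Or.inr ⟨hw, by nlinarith⟩⟩
    · rw [hw] at hj; simp at hj
    · rw [if_pos (Or.inr ⟨hg, hw⟩),
        if_neg (by push_neg; exact ⟨by rw [hg], fun _ => hw.le⟩)] at hj
      refine ⟨j, hv, hw.ne', hg, Or.inl ⟨hw, by nlinarith⟩⟩
  · exfalso
    rcases lt_trichotomy (w j * p + b j) 0 with h1 | h1 | h1
    · rw [if_neg (by push_neg; exact ⟨h1.le, fun he => absurd he hg⟩),
        if_neg (by push_neg; exact ⟨h1.le, fun he => absurd he hg⟩)] at hj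
      simp at hj
    · exact hg h1
    · rw [if_pos (Or.inl h1), if_pos (Or.inl h1)] at hj
      simp at hj


/-- Walking lemma on a concave-free piece. -/
lemma walk {k : ℕ} (w b v : Fin k → ℝ) (GGh : Finset ℝ) (lo hi α β : ℝ)
    (hact : ∀ z, z ∈ Set.Icc lo hi → IsActivationPoint w b v z → z ∈ GGh)
    (hsub : Set.Ioo α β ⊆ Set.Icc lo hi)
    (hconc : ∀ z ∈ Set.Ioo α β, SL w b v z ≤ SR w b v z) :
    ∀ d : ℕ, ∀ z1 z2 : ℝ, z1 ∈ Set.Ioo α β → z2 ∈ Set.Ioo α β → z1 < z2 →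
      (GGh.filter (· ∈ Set.Ioo z1 z2)).card ≤ d →
      (SR w b v z1 ≤ SR w b v z2 ∧
       NNet w b v z2 - NNet w b v z1 ≤ SL w b v z2 * (z2 - z1) ∧
       SR w b v z1 * (z2 - z1) ≤ NNet w b v z2 - NNet w b v z1) := by
  classical
  have base : ∀ z1 z2 : ℝ, z1 ∈ Set.Ioo α β → z2 ∈ Set.Ioo α β → z1 < z2 →
      (GGh.filter (· ∈ Set.Ioo z1 z2)) = ∅ →
      (SR w b v z1 = SL w b v z2 ∧
       NNet w b v z2 = NNet w b v z1 + SR w b v z1 * (z2 - z1)) := by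
    intro z1 z2 h1 h2 h12 hemp
    have hfree : ∀ z ∈ Set.Ioo z1 z2, ¬ IsActivationPoint w b v z := by
      intro z hz hactz
      have hzab : z ∈ Set.Ioo α β := ⟨lt_trans h1.1 hz.1, lt_trans hz.2 h2.2⟩
      have : z ∈ GGh.filter (· ∈ Set.Ioo z1 z2) :=
        Finset.mem_filter.mpr ⟨hact z (hsub hzab) hactz, hz⟩
      rw [hemp] at this
      exact absurd this (Finset.notMem_empty z)
    exact ⟨aff_SRSL w b v h12 hfree,
      aff_val w b v h12 hfree z2 ⟨h12.le, le_refl z2⟩⟩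
  intro d
  induction d with
  | zero =>
    intro z1 z2 h1 h2 h12 hcard
    have hemp : GGh.filter (· ∈ Set.Ioo z1 z2) = ∅ := Finset.card_eq_zero.mp (le_antisymm hcard (Nat.zero_le _))
    obtain ⟨e1, e2⟩ := base z1 z2 h1 h2 h12 hemp
    refine ⟨?_, ?_, ?_⟩
    · rw [e1]; exact hconc z2 h2
    · rw [e2, ← e1]; ring_nf; exact le_refl _
    · rw [e2]; ring_nf; exact le_refl _
  | succ d ih =>
    intro z1 z2 h1 h2 h12 hcard
    by_cases hemp : GGh.filter (· ∈ Set.Ioo z1 z2) = ∅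
    · obtain ⟨e1, e2⟩ := base z1 z2 h1 h2 h12 hemp
      refine ⟨?_, ?_, ?_⟩
      · rw [e1]; exact hconc z2 h2
      · rw [e2, ← e1]; ring_nf; exact le_refl _
      · rw [e2]; ring_nf; exact le_refl _
    · have hne : (GGh.filter (· ∈ Set.Ioo z1 z2)).Nonempty := Finset.nonempty_iff_ne_empty.mpr hemp
      set T := GGh.filter (· ∈ Set.Ioo z1 z2) with hT
      -- min and max elements
      set ζm := T.min' hne with hζm
      set ζM := T.max' hne with hζM
      have hζm_mem := T.min'_mem hne
      have hζM_mem := T.max'_mem hne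
      have hζm_Ioo : ζm ∈ Set.Ioo z1 z2 := (Finset.mem_filter.mp hζm_mem).2
      have hζM_Ioo : ζM ∈ Set.Ioo z1 z2 := (Finset.mem_filter.mp hζM_mem).2
      have hζm_ab : ζm ∈ Set.Ioo α β := ⟨lt_trans h1.1 hζm_Ioo.1, lt_trans hζm_Ioo.2 h2.2⟩
      have hζM_ab : ζM ∈ Set.Ioo α β := ⟨lt_trans h1.1 hζM_Ioo.1, lt_trans hζM_Ioo.2 h2.2⟩
      -- segments left/right of min/max are empty
      have hempL : GGh.filter (· ∈ Set.Ioo z1 ζm) = ∅ := by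
        rw [Finset.eq_empty_iff_forall_notMem]
        intro z hz
        obtain ⟨hzG, hzI⟩ := Finset.mem_filter.mp hz
        have : z ∈ T := Finset.mem_filter.mpr ⟨hzG, ⟨hzI.1, lt_trans hzI.2 hζm_Ioo.2⟩⟩
        exact absurd (T.min'_le z this) (not_le.mpr hzI.2)
      have hempR : GGh.filter (· ∈ Set.Ioo ζM z2) = ∅ := by
        rw [Finset.eq_empty_iff_forall_notMem]
        intro z hz
        obtain ⟨hzG, hzI⟩ := Finset.mem_filter.mp hz
        have : z ∈ T := Finset.mem_filter.mpr ⟨hzG, ⟨lt_trans hζM_Ioo.1 hzI.1, hzI.2⟩⟩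
        exact absurd (T.le_max' z this) (not_le.mpr hzI.1)
      -- card bounds for the inner segments
      have hsubm : GGh.filter (· ∈ Set.Ioo ζm z2) ⊆ T.erase ζm := by
        intro z hz
        obtain ⟨hzG, hzI⟩ := Finset.mem_filter.mp hz
        refine Finset.mem_erase.mpr ⟨ne_of_gt hzI.1, Finset.mem_filter.mpr ⟨hzG, ⟨lt_trans hζm_Ioo.1 hzI.1, hzI.2⟩⟩⟩
      have hsubM : GGh.filter (· ∈ Set.Ioo z1 ζM) ⊆ T.erase ζM := by
        intro z hz
        obtain ⟨hzG, hzI⟩ := Finset.mem_filter.mp hz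
        refine Finset.mem_erase.mpr ⟨ne_of_lt hzI.2, Finset.mem_filter.mpr ⟨hzG, ⟨hzI.1, lt_trans hzI.2 hζM_Ioo.2⟩⟩⟩
      have hcardm : (GGh.filter (· ∈ Set.Ioo ζm z2)).card ≤ d := by
        calc (GGh.filter (· ∈ Set.Ioo ζm z2)).card ≤ (T.erase ζm).card := Finset.card_le_card hsubm
        _ = T.card - 1 := Finset.card_erase_of_mem hζm_mem
        _ ≤ d := by omega
      have hcardM : (GGh.filter (· ∈ Set.Ioo z1 ζM)).card ≤ d := by
        calc (GGh.filter (· ∈ Set.Ioo z1 ζM)).card ≤ (T.erase ζM).card := Finset.card_le_card hsubM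
        _ = T.card - 1 := Finset.card_erase_of_mem hζM_mem
        _ ≤ d := by omega
      obtain ⟨bm1, bm2⟩ := base z1 ζm h1 hζm_ab hζm_Ioo.1 hempL
      obtain ⟨bM1, bM2⟩ := base ζM z2 hζM_ab h2 hζM_Ioo.2 hempR
      refine ⟨?_, ?_, ?_⟩
      · -- SR z1 = SL ζm ≤ SR ζm ≤ SR z2
        have h1' := hconc ζm hζm_ab
        have h2' := (ih ζm z2 hζm_ab h2 hζm_Ioo.2 hcardm).1
        linarith [bm1]
      · -- upper bound via ζM
        have ihM := (ih z1 ζM h1 hζM_ab hζM_Ioo.1 hcardM).2.1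
        have hLM : SL w b v ζM ≤ SL w b v z2 := by
          have := hconc ζM hζM_ab
          linarith [bM1]
        nlinarith [bM2, ihM, hζM_Ioo.1, hζM_Ioo.2, hLM, sub_pos.mpr hζM_Ioo.1]
      · -- lower bound via ζm
        have ihm := (ih ζm z2 hζm_ab h2 hζm_Ioo.2 hcardm).2.2
        have hRm : SR w b v z1 ≤ SR w b v ζm := by
          have := hconc ζm hζm_ab
          linarith [bm1]
        nlinarith [bm2, ihm, hζm_Ioo.1, hζm_Ioo.2, hRm, sub_pos.mpr hζm_Ioo.2]

/-- Dip lemma: inside a concave-free piece, between two one-points, if there is another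
one-point then there is no kink. -/
lemma dip {k : ℕ} (w b v : Fin k → ℝ) (GGh : Finset ℝ) (lo hi α β : ℝ)
    (hact : ∀ z, z ∈ Set.Icc lo hi → IsActivationPoint w b v z → z ∈ GGh)
    (hsub : Set.Ioo α β ⊆ Set.Icc lo hi)
    (hconc : ∀ z ∈ Set.Ioo α β, SL w b v z ≤ SR w b v z)
    {l r ζ ξ : ℝ} (hl : l ∈ Set.Ioo α β) (hr : r ∈ Set.Ioo α β)
    (hζ : ζ ∈ Set.Ioo l r) (hξ : ξ ∈ Set.Ioo l r)
    (hNl : NNet w b v l = 1) (hNr : NNet w b v r = 1) (hNζ : NNet w b v ζ = 1)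
    (hbad : SL w b v ξ ≠ SR w b v ξ) : False := by
  have W := walk w b v GGh lo hi α β hact hsub hconc GGh.card
  have Wapp : ∀ z1 z2 : ℝ, z1 ∈ Set.Ioo α β → z2 ∈ Set.Ioo α β → z1 < z2 →
      (NNet w b v z2 - NNet w b v z1 ≤ SL w b v z2 * (z2 - z1) ∧
       SR w b v z1 * (z2 - z1) ≤ NNet w b v z2 - NNet w b v z1) := by
    intro z1 z2 h1 h2 h12
    have := W z1 z2 h1 h2 h12 (Finset.card_filter_le _ _)
    exact ⟨this.2.1, this.2.2⟩
  have hmem : ∀ z ∈ Set.Ioo l r, z ∈ Set.Ioo α β := fun z hz =>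
    ⟨lt_trans hl.1 hz.1, lt_trans hz.2 hr.2⟩
  have hζab := hmem ζ hζ
  have hξab := hmem ξ hξ
  -- Step 1: N ≤ 1 on Ioo l r
  have hle1 : ∀ z ∈ Set.Ioo l r, NNet w b v z ≤ 1 := by
    intro z hz
    by_contra hgt
    push_neg at hgt
    have hzab := hmem z hz
    have c1 := (Wapp l z hl hzab hz.1).1
    have c2 := (Wapp z r hzab hr hz.2).2
    have c3 := hconc z hzab
    rw [hNl] at c1
    rw [hNr] at c2
    have hrz : (0:ℝ) < r - z := sub_pos.mpr hz.2
    have hzl : (0:ℝ) < z - l := sub_pos.mpr hz.1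
    have t1 : SL w b v z * (r - z) ≤ SR w b v z * (r - z) :=
      mul_le_mul_of_nonneg_right c3 hrz.le
    have t3 : SL w b v z < 0 := by nlinarith
    have t4 : SL w b v z * (z - l) < 0 := mul_neg_of_neg_of_pos t3 hzl
    linarith
  -- Step 2: N = 1 on Ioo l r
  have heq1 : ∀ z ∈ Set.Ioo l r, NNet w b v z = 1 := by
    intro z hz
    rcases eq_or_lt_of_le (hle1 z hz) with h | h
    · exact h
    exfalso
    have hzab := hmem z hz
    rcases lt_trichotomy z ζ with hzζ | hzζ | hzζ
    · -- z left of ζ : slope at ζ must be positive on the left, ≤ 0 on the right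
      have c1 := (Wapp z ζ hzab hζab hzζ).1
      have c2 := (Wapp ζ r hζab hr hζ.2).2
      have c3 := hconc ζ hζab
      rw [hNζ] at c1 c2
      rw [hNr] at c2
      have h1' : (0:ℝ) < ζ - z := sub_pos.mpr hzζ
      have h2' : (0:ℝ) < r - ζ := sub_pos.mpr hζ.2
      have t1 : SR w b v ζ ≤ 0 := by nlinarith
      have t2 : SL w b v ζ * (ζ - z) ≤ 0 := mul_nonpos_of_nonpos_of_nonneg (by linarith) h1'.le
      linarith
    · rw [hzζ] at h; rw [hNζ] at h; exact lt_irrefl 1 h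
    · have c1 := (Wapp l ζ hl hζab hζ.1).1
      have c2 := (Wapp ζ z hζab hzab hzζ).2
      have c3 := hconc ζ hζab
      rw [hNζ, hNl] at c1
      rw [hNζ] at c2
      have h1' : (0:ℝ) < ζ - l := sub_pos.mpr hζ.1
      have h2' : (0:ℝ) < z - ζ := sub_pos.mpr hzζ
      have t1 : 0 ≤ SL w b v ζ := by nlinarith
      have t2 : 0 ≤ SR w b v ζ * (z - ζ) := mul_nonneg (by linarith) h2'.le
      linarith
  -- Step 3: contradiction at ξ
  have c1 := (Wapp l ξ hl hξab hξ.1).1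
  have c2 := (Wapp ξ r hξab hr hξ.2).2
  have c3 := hconc ξ hξab
  rw [heq1 ξ hξ, hNl] at c1
  rw [heq1 ξ hξ, hNr] at c2
  have hSL0 : 0 ≤ SL w b v ξ := by
    have h1' : (0:ℝ) < ξ - l := sub_pos.mpr hξ.1
    nlinarith
  have hSR0 : SR w b v ξ ≤ 0 := by
    have h2' : (0:ℝ) < r - ξ := sub_pos.mpr hξ.2
    nlinarith
  exact hbad (le_antisymm c3 (by linarith))


theorem stmt5 {n k : ℕ} (x y : Fin n → ℝ)
    (hx : StrictMono x) (hy : ∀ i, y i = 1 ∨ y i = -1)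
    (w b v : Fin k → ℝ) (hKKT : IsKKT x y w b v)
    (a c : Fin n) (hac : a < c) (ha : 0 ≤ x a) (hxac : x a < x c)
    (hyac : ∀ i, a ≤ i → i ≤ c → y i = 1)
    (m : ℕ) (idx : Fin m → Fin n) (hmono : StrictMono idx)
    (hrange : ∀ i : Fin n,
      (a ≤ i ∧ i ≤ c ∧ y i * NNet w b v (x i) = 1) ↔ i ∈ Set.range idx)
    (hm : 0 < m) :
    {z ∈ Set.Icc (x (idx ⟨0, hm⟩)) (x (idx ⟨m - 1, Nat.sub_lt hm Nat.one_pos⟩)) |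
      ¬ LocallyAffineAt (NNet w b v) z}.encard ≤ 30 := by
  classical
  obtain ⟨hfeas, lam, sg, hl, hsg01, hsg1, hsg0, hcomp, hwf, hbf⟩ := hKKT
  set u := x (idx ⟨0, hm⟩) with hu
  set U := x (idx ⟨m - 1, Nat.sub_lt hm Nat.one_pos⟩) with hUdef
  have hidx0 : a ≤ idx ⟨0, hm⟩ ∧ idx ⟨0, hm⟩ ≤ c ∧
      y (idx ⟨0, hm⟩) * NNet w b v (x (idx ⟨0, hm⟩)) = 1 :=
    (hrange (idx ⟨0, hm⟩)).mpr ⟨⟨0, hm⟩, rfl⟩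
  have hidxm : a ≤ idx ⟨m - 1, Nat.sub_lt hm Nat.one_pos⟩ ∧
      idx ⟨m - 1, Nat.sub_lt hm Nat.one_pos⟩ ≤ c ∧
      y (idx ⟨m - 1, Nat.sub_lt hm Nat.one_pos⟩)
        * NNet w b v (x (idx ⟨m - 1, Nat.sub_lt hm Nat.one_pos⟩)) = 1 :=
    (hrange (idx ⟨m - 1, Nat.sub_lt hm Nat.one_pos⟩)).mpr ⟨⟨m - 1, Nat.sub_lt hm Nat.one_pos⟩, rfl⟩
  have hy0 : y (idx ⟨0, hm⟩) = 1 := hyac _ hidx0.1 hidx0.2.1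
  have hym : y (idx ⟨m - 1, Nat.sub_lt hm Nat.one_pos⟩) = 1 := hyac _ hidxm.1 hidxm.2.1
  have hNu : NNet w b v u = 1 := by
    have := hidx0.2.2; rw [hy0, one_mul] at this; exact this
  have hNU : NNet w b v U = 1 := by
    have := hidxm.2.2; rw [hym, one_mul] at this; exact this
  have hu0 : 0 ≤ u := le_trans ha (hx.monotone hidx0.1)
  have huU : u ≤ U := hx.monotone (hmono.monotone (Fin.mk_le_mk.mpr (Nat.zero_le _)))
  have hblock : ∀ i, u ≤ x i → x i ≤ U → y i = 1 := by
    intro i h1 h2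
    exact hyac i (le_trans hidx0.1 (hx.le_iff_le.mp h1)) (le_trans (hx.le_iff_le.mp h2) hidxm.2.1)
  rcases eq_or_lt_of_le huU with hEQ | huU'
  · -- degenerate case u = U
    have hsub : {z ∈ Set.Icc u U | ¬ LocallyAffineAt (NNet w b v) z} ⊆ {u} := by
      intro z hz
      have h1 := hz.1.1
      have h2 := hz.1.2
      rw [← hEQ] at h2
      exact le_antisymm h2 h1
    calc {z ∈ Set.Icc u U | ¬ LocallyAffineAt (NNet w b v) z}.encard
        ≤ ({u} : Set ℝ).encard := Set.encard_mono hsub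
      _ = 1 := Set.encard_singleton u
      _ ≤ 30 := by norm_num
  have hge1 : ∀ i, u ≤ x i → x i ≤ U → 1 ≤ NNet w b v (x i) := by
    intro i h1 h2
    have := hfeas i
    rw [hblock i h1 h2, one_mul] at this
    exact this
  have hlam0 : ∀ i, u ≤ x i → x i ≤ U → NNet w b v (x i) ≠ 1 → lam i = 0 := by
    intro i h1 h2 hne
    exact hcomp i (by rw [hblock i h1 h2, one_mul]; exact hne)
  -- the grid of candidate points
  set GGF : Finset ℝ :=
    ((((Finset.univ.filter fun j => v j ≠ 0 ∧ w j ≠ 0).image fun j => -(b j)/(w j))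
      ∪ Finset.univ.image x) ∪ {u, U}).filter (· ∈ Set.Icc u U) with hGGF
  have hactG : ∀ z, z ∈ Set.Icc u U → IsActivationPoint w b v z → z ∈ GGF := by
    rintro z hz ⟨j, hvj, hwj, hgj⟩
    refine Finset.mem_filter.mpr ⟨?_, hz⟩
    apply Finset.mem_union_left
    apply Finset.mem_union_left
    refine Finset.mem_image.mpr ⟨j, Finset.mem_filter.mpr ⟨Finset.mem_univ _, hvj, hwj⟩, ?_⟩
    field_simp
    linarith
  have hdataG : ∀ i, x i ∈ Set.Icc u U → x i ∈ GGF := by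
    intro i hz
    refine Finset.mem_filter.mpr ⟨?_, hz⟩
    apply Finset.mem_union_left
    apply Finset.mem_union_right
    exact Finset.mem_image.mpr ⟨i, Finset.mem_univ _, rfl⟩
  have hyeq : ∀ p ∈ Set.Icc u U, ∀ i, x i = p → y i = 1 := by
    intro p hp i he
    exact hblock i (by rw [he]; exact hp.1) (by rw [he]; exact hp.2)
  have classify : ∀ p ∈ Set.Icc u U, SL w b v p ≠ SR w b v p →
      (∃ A β, Rcond x y lam p A β) ∨ (∃ A β, Lcond x y lam p A β) := by
    intro p hp hbad
    obtain ⟨j, hvj, hwj, hgj⟩ := bad_is_activation w b v p hbad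
    obtain ⟨A, β, hwA, hR, hL⟩ :=
      extract x y lam w b v sg hl hsg01 hsg1 hsg0 hwf hbf (hyeq p hp) hvj hwj hgj
    rcases lt_trichotomy (w j) 0 with h | h | h
    · exact Or.inr ⟨A, β, hL h⟩
    · exact absurd h hwj
    · exact Or.inl ⟨A, β, hR h⟩
  have classifyC : ∀ p ∈ Set.Icc u U, SR w b v p < SL w b v p →
      (∃ A β, Rcond x y lam p A β ∧ A < 0) ∨ (∃ A β, Lcond x y lam p A β ∧ 0 < A) := by
    intro p hp hcv
    obtain ⟨j, hvj, hwj, hgj, hsgn⟩ := concave_neuron w b v p hcv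
    obtain ⟨A, β, hwA, hR, hL⟩ :=
      extract x y lam w b v sg hl hsg01 hsg1 hsg0 hwf hbf (hyeq p hp) hvj hwj hgj
    rcases hsgn with ⟨hw, hvw⟩ | ⟨hw, hvw⟩
    · refine Or.inl ⟨A, β, hR hw, ?_⟩
      rw [hwA] at hvw
      nlinarith [sq_nonneg (v j)]
    · refine Or.inr ⟨A, β, hL hw, ?_⟩
      rw [hwA] at hvw
      nlinarith [sq_nonneg (v j)]
  set BadF : Finset ℝ := GGF.filter (fun z => SL w b v z ≠ SR w b v z) with hBadF
  have hBadIcc : ∀ z ∈ BadF, z ∈ Set.Icc u U := fun z hz =>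
    (Finset.mem_filter.mp (Finset.mem_filter.mp hz).1).2
  have hBadBad : ∀ z ∈ BadF, SL w b v z ≠ SR w b v z := fun z hz =>
    (Finset.mem_filter.mp hz).2
  -- the support-free zone bound
  have ZONE : ∀ α' β' : ℝ, u ≤ α' → β' ≤ U →
      (∀ i, x i ∈ Set.Ioo α' β' → NNet w b v (x i) ≠ 1) →
      (BadF.filter (· ∈ Set.Ioo α' β')).card ≤ 2 := by
    intro α' β' hα hβ hfree
    have hIccsub : Set.Ioo α' β' ⊆ Set.Icc u U := fun z hz =>
      ⟨le_trans hα hz.1.le, le_trans hz.2.le hβ⟩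
    have hz0 : ∀ p q : ℝ, p ∈ Set.Ioo α' β' → q ∈ Set.Ioo α' β' →
        ∀ i, p ≤ x i → x i ≤ q → lam i = 0 := by
      intro p q hp hq i h1 h2
      have hxi : x i ∈ Set.Ioo α' β' := ⟨lt_of_lt_of_le hp.1 h1, lt_of_le_of_lt h2 hq.2⟩
      exact hlam0 i (hIccsub hxi).1 (hIccsub hxi).2 (hfree i hxi)
    set T := BadF.filter (· ∈ Set.Ioo α' β') with hT
    set TR := T.filter (fun z => ∃ A β, Rcond x y lam z A β) with hTR
    set TL := T.filter (fun z => ∃ A β, Lcond x y lam z A β) with hTL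
    have hsubRL : T ⊆ TR ∪ TL := by
      intro z hz
      have hzI := (Finset.mem_filter.mp hz).2
      have hzB := (Finset.mem_filter.mp hz).1
      rcases classify z (hIccsub hzI) (hBadBad z hzB) with h | h
      · exact Finset.mem_union_left _ (Finset.mem_filter.mpr ⟨hz, h⟩)
      · exact Finset.mem_union_right _ (Finset.mem_filter.mpr ⟨hz, h⟩)
    have hTRcard : TR.card ≤ 1 := by
      refine Finset.card_le_one.mpr (fun z1 h1 z2 h2 => ?_)
      by_contra hne
      obtain ⟨A1, β1, hc1⟩ := (Finset.mem_filter.mp h1).2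
      obtain ⟨A2, β2, hc2⟩ := (Finset.mem_filter.mp h2).2
      have hI1 := (Finset.mem_filter.mp (Finset.mem_filter.mp h1).1).2
      have hI2 := (Finset.mem_filter.mp (Finset.mem_filter.mp h2).1).2
      rcases lt_or_gt_of_ne hne with hlt | hlt
      · exact pair_zero_R x y lam hlt (hz0 z1 z2 hI1 hI2) hc1 hc2
      · exact pair_zero_R x y lam hlt (hz0 z2 z1 hI2 hI1) hc2 hc1
    have hTLcard : TL.card ≤ 1 := by
      refine Finset.card_le_one.mpr (fun z1 h1 z2 h2 => ?_)
      by_contra hne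
      obtain ⟨A1, β1, hc1⟩ := (Finset.mem_filter.mp h1).2
      obtain ⟨A2, β2, hc2⟩ := (Finset.mem_filter.mp h2).2
      have hI1 := (Finset.mem_filter.mp (Finset.mem_filter.mp h1).1).2
      have hI2 := (Finset.mem_filter.mp (Finset.mem_filter.mp h2).1).2
      rcases lt_or_gt_of_ne hne with hlt | hlt
      · exact pair_zero_L x y lam hlt (hz0 z1 z2 hI1 hI2) hc1 hc2
      · exact pair_zero_L x y lam hlt (hz0 z2 z1 hI2 hI1) hc2 hc1
    calc T.card ≤ (TR ∪ TL).card := Finset.card_le_card hsubRL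
      _ ≤ TR.card + TL.card := Finset.card_union_le _ _
      _ ≤ 2 := by omega
  -- the piece bound
  have PIECE : ∀ α' β' : ℝ, u ≤ α' → β' ≤ U →
      (∀ z ∈ Set.Ioo α' β', SL w b v z ≤ SR w b v z) →
      (BadF.filter (· ∈ Set.Ioo α' β')).card ≤ 8 := by
    intro α' β' hα hβ hconc
    have hIccsub : Set.Ioo α' β' ⊆ Set.Icc u U := fun z hz =>
      ⟨le_trans hα hz.1.le, le_trans hz.2.le hβ⟩
    set TF := GGF.filter (fun z => z ∈ Set.Ioo α' β' ∧ (∃ i, x i = z) ∧ NNet w b v z = 1)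
      with hTFdef
    by_cases hTFe : TF = ∅
    · refine le_trans (ZONE α' β' hα hβ ?_) (by norm_num)
      intro i hi hN1
      have : x i ∈ TF := Finset.mem_filter.mpr ⟨hdataG i (hIccsub hi), hi, ⟨i, rfl⟩, hN1⟩
      rw [hTFe] at this
      exact absurd this (Finset.notMem_empty _)
    · have hTFne : TF.Nonempty := Finset.nonempty_iff_ne_empty.mpr hTFe
      set l := TF.min' hTFne with hldef
      set r := TF.max' hTFne with hrdef
      have hlmem := TF.min'_mem hTFne
      have hrmem := TF.max'_mem hTFne
      have hlIoo : l ∈ Set.Ioo α' β' := (Finset.mem_filter.mp hlmem).2.1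
      have hrIoo : r ∈ Set.Ioo α' β' := (Finset.mem_filter.mp hrmem).2.1
      have hNl : NNet w b v l = 1 := (Finset.mem_filter.mp hlmem).2.2.2
      have hNr : NNet w b v r = 1 := (Finset.mem_filter.mp hrmem).2.2.2
      have hcover : BadF.filter (· ∈ Set.Ioo α' β') ⊆
          ((((BadF.filter (· ∈ Set.Ioo α' l)) ∪ {l}) ∪ ((BadF.filter (· ∈ Set.Ioo l r)) ∪ {r}))
            ∪ (BadF.filter (· ∈ Set.Ioo r β'))) := by
        intro z hz
        obtain ⟨hzB, hzI⟩ := Finset.mem_filter.mp hz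
        rcases lt_trichotomy z l with h | h | h
        · exact Finset.mem_union_left _ (Finset.mem_union_left _
            (Finset.mem_union_left _ (Finset.mem_filter.mpr ⟨hzB, hzI.1, h⟩)))
        · exact Finset.mem_union_left _ (Finset.mem_union_left _
            (Finset.mem_union_right _ (Finset.mem_singleton.mpr h)))
        rcases lt_trichotomy z r with h' | h' | h'
        · exact Finset.mem_union_left _ (Finset.mem_union_right _
            (Finset.mem_union_left _ (Finset.mem_filter.mpr ⟨hzB, h, h'⟩)))
        · exact Finset.mem_union_left _ (Finset.mem_union_right _
            (Finset.mem_union_right _ (Finset.mem_singleton.mpr h')))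
        · exact Finset.mem_union_right _ (Finset.mem_filter.mpr ⟨hzB, h', hzI.2⟩)
      have hZ1 : (BadF.filter (· ∈ Set.Ioo α' l)).card ≤ 2 := by
        refine ZONE α' l hα (le_trans hlIoo.2.le hβ) ?_
        intro i hi hN1
        have hxi : x i ∈ Set.Ioo α' β' := ⟨hi.1, lt_trans hi.2 hlIoo.2⟩
        have : x i ∈ TF := Finset.mem_filter.mpr ⟨hdataG i (hIccsub hxi), hxi, ⟨i, rfl⟩, hN1⟩
        exact absurd (TF.min'_le _ this) (not_le.mpr hi.2)
      have hZ3 : (BadF.filter (· ∈ Set.Ioo r β')).card ≤ 2 := by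
        refine ZONE r β' (le_trans hα hrIoo.1.le) hβ ?_
        intro i hi hN1
        have hxi : x i ∈ Set.Ioo α' β' := ⟨lt_trans hrIoo.1 hi.1, hi.2⟩
        have : x i ∈ TF := Finset.mem_filter.mpr ⟨hdataG i (hIccsub hxi), hxi, ⟨i, rfl⟩, hN1⟩
        exact absurd (TF.le_max' _ this) (not_le.mpr hi.1)
      have hZ2 : (BadF.filter (· ∈ Set.Ioo l r)).card ≤ 2 := by
        by_cases hmid : ∃ ζ ∈ TF, ζ ∈ Set.Ioo l r
        · obtain ⟨ζ, hζTF, hζI⟩ := hmid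
          have hNζ : NNet w b v ζ = 1 := (Finset.mem_filter.mp hζTF).2.2.2
          have : BadF.filter (· ∈ Set.Ioo l r) = ∅ := by
            rw [Finset.eq_empty_iff_forall_notMem]
            intro ξ hξ
            obtain ⟨hξB, hξI⟩ := Finset.mem_filter.mp hξ
            exact dip w b v GGF u U α' β' hactG hIccsub hconc hlIoo hrIoo hζI hξI
              hNl hNr hNζ (hBadBad ξ hξB)
          rw [this]
          norm_num
        · push_neg at hmid
          refine ZONE l r (le_trans hα hlIoo.1.le) (le_trans hrIoo.2.le hβ) ?_
          intro i hi hN1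
          have hxi : x i ∈ Set.Ioo α' β' := ⟨lt_trans hlIoo.1 hi.1, lt_trans hi.2 hrIoo.2⟩
          have : x i ∈ TF := Finset.mem_filter.mpr ⟨hdataG i (hIccsub hxi), hxi, ⟨i, rfl⟩, hN1⟩
          exact hmid (x i) this hi
      calc (BadF.filter (· ∈ Set.Ioo α' β')).card
          ≤ _ := Finset.card_le_card hcover
        _ ≤ _ + (BadF.filter (· ∈ Set.Ioo r β')).card := Finset.card_union_le _ _
        _ ≤ 8 := by
            have h1 := Finset.card_union_le ((BadF.filter (· ∈ Set.Ioo α' l)) ∪ {l})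
              ((BadF.filter (· ∈ Set.Ioo l r)) ∪ {r})
            have h2 := Finset.card_union_le (BadF.filter (· ∈ Set.Ioo α' l)) ({l} : Finset ℝ)
            have h3 := Finset.card_union_le (BadF.filter (· ∈ Set.Ioo l r)) ({r} : Finset ℝ)
            simp only [Finset.card_singleton] at h2 h3
            omega
  -- concave points
  set Conc := BadF.filter (fun z => SR w b v z < SL w b v z) with hConc
  have hConcIcc : ∀ z ∈ Conc, z ∈ Set.Icc u U := fun z hz =>
    hBadIcc z (Finset.mem_filter.mp hz).1
  have hyb : ∀ p q : ℝ, p ∈ Set.Icc u U → q ∈ Set.Icc u U →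
      ∀ i, p ≤ x i → x i ≤ q → y i = 1 := fun p q hp hq i h1 h2 =>
    hblock i (le_trans hp.1 h1) (le_trans h2 hq.2)
  have hConcCard : Conc.card ≤ 2 := by
    set CR := Conc.filter (fun z => ∃ A β, Rcond x y lam z A β ∧ A < 0) with hCR
    set CL := Conc.filter (fun z => ∃ A β, Lcond x y lam z A β ∧ 0 < A) with hCL
    have hsub : Conc ⊆ CR ∪ CL := by
      intro z hz
      have hzc := (Finset.mem_filter.mp hz).2
      rcases classifyC z (hConcIcc z hz) hzc with h | h
      · exact Finset.mem_union_left _ (Finset.mem_filter.mpr ⟨hz, h⟩)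
      · exact Finset.mem_union_right _ (Finset.mem_filter.mpr ⟨hz, h⟩)
    have hCRcard : CR.card ≤ 1 := by
      refine Finset.card_le_one.mpr (fun z1 h1 z2 h2 => ?_)
      by_contra hne
      obtain ⟨A1, β1, hc1, hA1⟩ := (Finset.mem_filter.mp h1).2
      obtain ⟨A2, β2, hc2, hA2⟩ := (Finset.mem_filter.mp h2).2
      have hI1 := hConcIcc z1 (Finset.mem_filter.mp h1).1
      have hI2 := hConcIcc z2 (Finset.mem_filter.mp h2).1
      rcases lt_or_gt_of_ne hne with hlt | hlt
      · exact pair_RR x y lam (le_trans hu0 hI1.1) hlt hl (hyb z1 z2 hI1 hI2) hc1 hA1 hc2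
      · exact pair_RR x y lam (le_trans hu0 hI2.1) hlt hl (hyb z2 z1 hI2 hI1) hc2 hA2 hc1
    have hCLcard : CL.card ≤ 1 := by
      refine Finset.card_le_one.mpr (fun z1 h1 z2 h2 => ?_)
      by_contra hne
      obtain ⟨A1, β1, hc1, hA1⟩ := (Finset.mem_filter.mp h1).2
      obtain ⟨A2, β2, hc2, hA2⟩ := (Finset.mem_filter.mp h2).2
      have hI1 := hConcIcc z1 (Finset.mem_filter.mp h1).1
      have hI2 := hConcIcc z2 (Finset.mem_filter.mp h2).1
      rcases lt_or_gt_of_ne hne with hlt | hlt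
      · exact pair_LL x y lam (le_trans hu0 hI1.1) hlt hl (hyb z1 z2 hI1 hI2) hc1 hA1 hc2
      · exact pair_LL x y lam (le_trans hu0 hI2.1) hlt hl (hyb z2 z1 hI2 hI1) hc2 hA2 hc1
    calc Conc.card ≤ (CR ∪ CL).card := Finset.card_le_card hsub
      _ ≤ CR.card + CL.card := Finset.card_union_le _ _
      _ ≤ 2 := by omega
  -- choose the (at most two) concave points
  obtain ⟨c1, c2, hc1I, hc2I, hc12, hConcMem⟩ :
      ∃ c1 c2 : ℝ, c1 ∈ Set.Icc u U ∧ c2 ∈ Set.Icc u U ∧ c1 ≤ c2 ∧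
        ∀ z ∈ Conc, z = c1 ∨ z = c2 := by
    by_cases hCe : Conc.Nonempty
    · refine ⟨Conc.min' hCe, Conc.max' hCe, hConcIcc _ (Conc.min'_mem hCe),
        hConcIcc _ (Conc.max'_mem hCe), Conc.min'_le _ (Conc.max'_mem hCe), ?_⟩
      intro z hz
      by_contra hcon
      push_neg at hcon
      obtain ⟨hne1, hne2⟩ := hcon
      have h1 : Conc.min' hCe < z := lt_of_le_of_ne (Conc.min'_le z hz) (Ne.symm hne1)
      have h2 : z < Conc.max' hCe := lt_of_le_of_ne (Conc.le_max' z hz) hne2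
      have hsub3 : ({Conc.min' hCe, z, Conc.max' hCe} : Finset ℝ) ⊆ Conc := by
        intro t ht
        simp only [Finset.mem_insert, Finset.mem_singleton] at ht
        rcases ht with rfl | rfl | rfl
        · exact Conc.min'_mem hCe
        · exact hz
        · exact Conc.max'_mem hCe
      have hcard3 : ({Conc.min' hCe, z, Conc.max' hCe} : Finset ℝ).card = 3 := by
        rw [Finset.card_insert_of_notMem, Finset.card_insert_of_notMem,
          Finset.card_singleton]
        · simp only [Finset.mem_singleton]
          exact ne_of_lt h2
        · simp only [Finset.mem_insert, Finset.mem_singleton]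
          push_neg
          exact ⟨ne_of_lt h1, ne_of_lt (lt_trans h1 h2)⟩
      have := Finset.card_le_card hsub3
      omega
    · rw [Finset.not_nonempty_iff_eq_empty] at hCe
      exact ⟨u, u, ⟨le_refl u, huU⟩, ⟨le_refl u, huU⟩, le_refl u,
        fun z hz => by rw [hCe] at hz; exact absurd hz (Finset.notMem_empty z)⟩
  -- concave-freeness of the three pieces
  have hfreepiece : ∀ α' β' : ℝ, u ≤ α' → β' ≤ U →
      (∀ z ∈ Set.Ioo α' β', z ≠ c1 ∧ z ≠ c2) →
      ∀ z ∈ Set.Ioo α' β', SL w b v z ≤ SR w b v z := by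
    intro α' β' hα hβ hnc z hz
    by_contra hcv
    push_neg at hcv
    have hne : SL w b v z ≠ SR w b v z := ne_of_gt hcv
    have hzIcc : z ∈ Set.Icc u U := ⟨le_trans hα hz.1.le, le_trans hz.2.le hβ⟩
    have hzB : z ∈ BadF := Finset.mem_filter.mpr
      ⟨hactG z hzIcc (bad_is_activation w b v z hne), hne⟩
    have hzC : z ∈ Conc := Finset.mem_filter.mpr ⟨hzB, hcv⟩
    rcases hConcMem z hzC with h | h
    · exact (hnc z hz).1 h
    · exact (hnc z hz).2 h
  -- the three piece bounds
  have hP1 : (BadF.filter (· ∈ Set.Ioo u c1)).card ≤ 8 := by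
    refine PIECE u c1 (le_refl u) hc1I.2 (hfreepiece u c1 (le_refl u) hc1I.2 ?_)
    intro z hz
    exact ⟨ne_of_lt hz.2, ne_of_lt (lt_of_lt_of_le hz.2 hc12)⟩
  have hP2 : (BadF.filter (· ∈ Set.Ioo c1 c2)).card ≤ 8 := by
    refine PIECE c1 c2 hc1I.1 hc2I.2 (hfreepiece c1 c2 hc1I.1 hc2I.2 ?_)
    intro z hz
    exact ⟨ne_of_gt hz.1, ne_of_lt hz.2⟩
  have hP3 : (BadF.filter (· ∈ Set.Ioo c2 U)).card ≤ 8 := by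
    refine PIECE c2 U hc2I.1 (le_refl U) (hfreepiece c2 U hc2I.1 (le_refl U) ?_)
    intro z hz
    exact ⟨ne_of_gt (lt_of_le_of_lt hc12 hz.1), ne_of_gt hz.1⟩
  -- the global cover
  have hcover : BadF ⊆ (({u, U, c1, c2} : Finset ℝ) ∪
      ((BadF.filter (· ∈ Set.Ioo u c1) ∪ BadF.filter (· ∈ Set.Ioo c1 c2))
        ∪ BadF.filter (· ∈ Set.Ioo c2 U))) := by
    intro z hz
    have hzI := hBadIcc z hz
    by_cases h1 : z = u
    · exact Finset.mem_union_left _ (by simp [h1])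
    by_cases h2 : z = U
    · exact Finset.mem_union_left _ (by simp [h2])
    by_cases h3 : z = c1
    · exact Finset.mem_union_left _ (by simp [h3])
    by_cases h4 : z = c2
    · exact Finset.mem_union_left _ (by simp [h4])
    have hzu : u < z := lt_of_le_of_ne hzI.1 (Ne.symm h1)
    have hzU : z < U := lt_of_le_of_ne hzI.2 h2
    apply Finset.mem_union_right
    rcases lt_trichotomy z c1 with h | h | h
    · exact Finset.mem_union_left _ (Finset.mem_union_left _
        (Finset.mem_filter.mpr ⟨hz, hzu, h⟩))
    · exact absurd h h3
    rcases lt_trichotomy z c2 with h' | h' | h'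
    · exact Finset.mem_union_left _ (Finset.mem_union_right _
        (Finset.mem_filter.mpr ⟨hz, h, h'⟩))
    · exact absurd h' h4
    · exact Finset.mem_union_right _ (Finset.mem_filter.mpr ⟨hz, h', hzU⟩)
  have hS4 : ({u, U, c1, c2} : Finset ℝ).card ≤ 4 := by
    apply le_trans (Finset.card_insert_le _ _)
    have : ({U, c1, c2} : Finset ℝ).card ≤ 3 := by
      apply le_trans (Finset.card_insert_le _ _)
      have : ({c1, c2} : Finset ℝ).card ≤ 2 := by
        apply le_trans (Finset.card_insert_le _ _)
        simp
      omega
    omega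
  have hfinal : BadF.card ≤ 28 := by
    have hc := Finset.card_le_card hcover
    have h5 := Finset.card_union_le ({u, U, c1, c2} : Finset ℝ)
      ((BadF.filter (· ∈ Set.Ioo u c1) ∪ BadF.filter (· ∈ Set.Ioo c1 c2))
        ∪ BadF.filter (· ∈ Set.Ioo c2 U))
    have h6 := Finset.card_union_le
      (BadF.filter (· ∈ Set.Ioo u c1) ∪ BadF.filter (· ∈ Set.Ioo c1 c2))
      (BadF.filter (· ∈ Set.Ioo c2 U))
    have h7 := Finset.card_union_le (BadF.filter (· ∈ Set.Ioo u c1))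
      (BadF.filter (· ∈ Set.Ioo c1 c2))
    omega
  -- conclusion
  have hPsub : {z ∈ Set.Icc u U | ¬ LocallyAffineAt (NNet w b v) z} ⊆ (↑BadF : Set ℝ) := by
    intro z hz
    obtain ⟨hzI, hnla⟩ := hz
    have hne : SL w b v z ≠ SR w b v z := fun he =>
      hnla ((locallyAffineAt_iff w b v z).mpr he)
    exact Finset.mem_coe.mpr (Finset.mem_filter.mpr
      ⟨hactG z hzI (bad_is_activation w b v z hne), hne⟩)
  calc {z ∈ Set.Icc u U | ¬ LocallyAffineAt (NNet w b v) z}.encard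
      ≤ (↑BadF : Set ℝ).encard := Set.encard_mono hPsub
    _ = (BadF.card : ℕ∞) := Set.encard_coe_eq_coe_finsetCard BadF
    _ ≤ 30 := by exact_mod_cast le_trans hfinal (by norm_num)
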